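/- The success probability of the optimal measurement for determining the least significant bit of the shift, p̃ := ½[1 + (1/(2N)^k)(Σ_{x ∈ (ℤ/N)^k} Σ_{r ∈ ℤ/N} √(η_r^x η_{−r}^x) + 2η_0^x + 2η_{N/2}^x)], satisfies p̃ ≤ ½(1 + 2^k/N + 6/N + 3/2^k). -/

import Mathlib

open Finset

/-- The subset sum `b · x = ∑ j, b j * x j` over `ℤ/N`. -/
def dotP {N k : ℕ} (b : Fin k → Bool) (x : Fin k → ZMod N) : ZMod N :=
  ∑ j, if b j then x j else 0

/-- `η_r^x`: the number of bit strings `b ∈ {0,1}^k` with `b · x ≡ r (mod N)`. -/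
def etaN {N k : ℕ} (r : ZMod N) (x : Fin k → ZMod N) : ℕ :=
  (Finset.univ.filter fun b : Fin k → Bool => dotP b x = r).card

set_option linter.unusedSectionVars false

section main
variable {N k : ℕ} [NeZero N]

lemma sum_split (c x : Fin k → ZMod N) (j₀ : Fin k) :
    ∑ j, c j * x j = c j₀ * x j₀ + ∑ j : {j : Fin k // j ≠ j₀}, c j * x j := by
  rw [Fintype.sum_eq_add_sum_compl j₀]
  congr 1
  exact (Finset.sum_subtype _ (by simp) _)

lemma card_fiber (c : Fin k → ZMod N) (j₀ : Fin k) (hc : c j₀ = 1) (t : ZMod N) :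
    (Finset.univ.filter fun x : Fin k → ZMod N => ∑ j, c j * x j = t).card = N ^ (k - 1) := by
  rw [← Fintype.card_subtype]
  have e : {x : Fin k → ZMod N // ∑ j, c j * x j = t} ≃ ({j : Fin k // j ≠ j₀} → ZMod N) :=
    { toFun := fun x j => x.1 j
      invFun := fun y =>
        ⟨fun j => if h : j = j₀ then t - ∑ j' : {j : Fin k // j ≠ j₀}, c j' * y j'
          else y ⟨j, h⟩, by
          rw [sum_split c _ j₀, hc, one_mul, dif_pos rfl]
          have h1 : ∀ j' : {j : Fin k // j ≠ j₀},
              c j' * (if h : (j' : Fin k) = j₀ then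
                t - ∑ j'' : {j : Fin k // j ≠ j₀}, c j'' * y j'' else y ⟨j', h⟩)
                = c j' * y j' := by
            intro j'; rw [dif_neg j'.2]
          rw [Finset.sum_congr rfl fun j' _ => h1 j']
          ring⟩
      left_inv := by
        rintro ⟨x, hx⟩
        ext j
        by_cases h : j = j₀
        · subst h
          simp only [dif_pos]
          rw [sum_split c x j] at hx
          rw [hc, one_mul] at hx
          linear_combination -hx
        · simp [h]
      right_inv := by
        intro y
        ext j
        simp [j.2] }
  rw [Fintype.card_congr e, Fintype.card_fun]
  congr 1
  · exact ZMod.card N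
  · rw [Fintype.card_subtype_compl, Fintype.card_subtype_eq, Fintype.card_fin]

lemma dot_linear (b : Fin k → Bool) (x : Fin k → ZMod N) :
    dotP b x = ∑ j, (if b j then (1 : ZMod N) else 0) * x j := by
  unfold dotP
  refine Finset.sum_congr rfl fun j _ => ?_
  by_cases h : b j <;> simp [h]

-- fiber for b ≠ 0
lemma card_fiber_dot {b : Fin k → Bool} {j₀ : Fin k} (hb : b j₀ = true) (t : ZMod N) :
    (Finset.univ.filter fun x : Fin k → ZMod N => dotP b x = t).card = N ^ (k - 1) := by
  simp_rw [dot_linear]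
  exact card_fiber _ j₀ (by simp [hb]) t

-- fiber for pair sum, b j₀ ≠ b' j₀
lemma card_fiber_pair {b b' : Fin k → Bool} {j₀ : Fin k} (hb : b j₀ ≠ b' j₀) :
    (Finset.univ.filter fun x : Fin k → ZMod N =>
      dotP b x + dotP b' x = 0).card = N ^ (k - 1) := by
  have hrw : ∀ x : Fin k → ZMod N, dotP b x + dotP b' x
      = ∑ j, ((if b j then (1 : ZMod N) else 0) + (if b' j then 1 else 0)) * x j := by
    intro x
    rw [dot_linear, dot_linear, ← Finset.sum_add_distrib]
    exact Finset.sum_congr rfl fun j _ => by ring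
  simp_rw [hrw]
  refine card_fiber _ j₀ ?_ 0
  rcases Bool.eq_false_or_eq_true (b j₀) with h | h <;>
    rcases Bool.eq_false_or_eq_true (b' j₀) with h' | h' <;>
      simp [h, h'] at hb ⊢

lemma roots_card : (Finset.univ.filter fun s : ZMod N => s + s = 0).card ≤ 2 := by
  have hsub : (Finset.univ.filter fun s : ZMod N => s + s = 0)
      ⊆ {0, ((N / 2 : ℕ) : ZMod N)} := by
    intro s hs
    have hs0 : s + s = 0 := (Finset.mem_filter.mp hs).2
    have h2 : ((2 * s.val : ℕ) : ZMod N) = 0 := by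
      push_cast
      rw [ZMod.natCast_zmod_val]
      linear_combination hs0
    have hdvd : N ∣ 2 * s.val := (ZMod.natCast_eq_zero_iff _ _).mp h2
    have hlt : s.val < N := ZMod.val_lt s
    have : s.val = 0 ∨ 2 * s.val = N := by
      obtain ⟨c, hc⟩ := hdvd
      match c, hc with
      | 0, hc => left; omega
      | 1, hc => right; omega
      | (c+2), hc =>
        exfalso
        have h2N : N * 2 ≤ N * (c + 2) := Nat.mul_le_mul_left _ (by omega)
        omega
    simp only [Finset.mem_insert, Finset.mem_singleton]
    rcases this with h | h
    · left
      have := (ZMod.val_eq_zero s).mp h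
      exact this
    · right
      have hval : s.val = N / 2 := by omega
      rw [← ZMod.natCast_zmod_val s, hval]
  calc _ ≤ ({0, ((N / 2 : ℕ) : ZMod N)} : Finset (ZMod N)).card := Finset.card_le_card hsub
    _ ≤ 2 := Finset.card_insert_le _ _ |>.trans (by simp)

-- diagonal fiber
lemma card_fiber_diag {b : Fin k → Bool} {j₀ : Fin k} (hb : b j₀ = true) :
    (Finset.univ.filter fun x : Fin k → ZMod N =>
      dotP b x + dotP b x = 0).card ≤ 2 * N ^ (k - 1) := by
  rw [Finset.card_eq_sum_card_fiberwise (f := fun x => dotP b x)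
    (t := Finset.univ.filter fun s : ZMod N => s + s = 0)
    (fun x hx => by
      simp only [Finset.mem_coe, Finset.mem_filter, Finset.mem_univ, true_and] at hx ⊢
      exact hx)]
  calc ∑ s ∈ Finset.univ.filter (fun s : ZMod N => s + s = 0),
        ((Finset.univ.filter fun x : Fin k → ZMod N => dotP b x + dotP b x = 0).filter
          fun x => dotP b x = s).card
      ≤ ∑ _s ∈ Finset.univ.filter (fun s : ZMod N => s + s = 0), N ^ (k - 1) := by
        refine Finset.sum_le_sum fun s _ => ?_
        rw [← card_fiber_dot (N := N) hb s]
        exact Finset.card_le_card (by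
          intro x hx
          simp only [Finset.mem_filter] at hx ⊢
          exact ⟨Finset.mem_univ _, hx.2⟩)
    _ = (Finset.univ.filter (fun s : ZMod N => s + s = 0)).card * N ^ (k - 1) := by
        rw [Finset.sum_const, smul_eq_mul]
    _ ≤ 2 * N ^ (k - 1) := Nat.mul_le_mul_right _ roots_card

lemma sum_card_swap {α β : Type*} [Fintype α] [Fintype β] (P : α → β → Prop)
    [∀ a b, Decidable (P a b)] :
    ∑ x : β, (Finset.univ.filter fun a : α => P a x).card
      = ∑ a : α, (Finset.univ.filter fun x : β => P a x).card := by
  simp_rw [Finset.card_filter]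
  exact Finset.sum_comm

lemma sum_eta_mul (x : Fin k → ZMod N) :
    ∑ r : ZMod N, etaN r x * etaN (-r) x
      = (Finset.univ.filter fun p : (Fin k → Bool) × (Fin k → Bool) =>
          dotP p.1 x + dotP p.2 x = 0).card := by
  rw [Finset.card_eq_sum_card_fiberwise (f := fun p => dotP p.1 x) (t := Finset.univ)
    (fun p _ => Finset.mem_univ _)]
  refine Finset.sum_congr rfl fun r _ => ?_
  rw [etaN, etaN, ← Finset.card_product]
  congr 1
  ext ⟨b, b'⟩
  simp only [Finset.mem_filter, Finset.mem_product, Finset.mem_univ, true_and]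
  constructor
  · rintro ⟨h1, h2⟩
    exact ⟨by rw [h1, h2]; ring, h1⟩
  · rintro ⟨h1, h2⟩
    refine ⟨h2, ?_⟩
    rw [h2] at h1
    linear_combination h1

lemma exists_true {b : Fin k → Bool} (hb : b ≠ fun _ => false) : ∃ j, b j = true := by
  by_contra h
  push_neg at h
  exact hb (funext fun j => by simpa using h j)

lemma card_bool_fun : Fintype.card (Fin k → Bool) = 2 ^ k := by
  simp [Fintype.card_fun]

lemma T1_bound : ∑ x : Fin k → ZMod N, ∑ r : ZMod N, etaN r x * etaN (-r) x
    ≤ N ^ k + (4 ^ k + 2 ^ k) * N ^ (k - 1) := by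
  calc ∑ x : Fin k → ZMod N, ∑ r : ZMod N, etaN r x * etaN (-r) x
      = ∑ x : Fin k → ZMod N, (Finset.univ.filter
          fun p : (Fin k → Bool) × (Fin k → Bool) =>
          dotP p.1 x + dotP p.2 x = 0).card :=
        Finset.sum_congr rfl fun x _ => sum_eta_mul x
    _ = ∑ p : (Fin k → Bool) × (Fin k → Bool),
          (Finset.univ.filter fun x : Fin k → ZMod N =>
            dotP p.1 x + dotP p.2 x = 0).card := sum_card_swap _
    _ ≤ ∑ p : (Fin k → Bool) × (Fin k → Bool),
          (N ^ (k - 1) + if p.1 = p.2 then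
            (N ^ (k - 1) + if p.1 = (fun _ => false) then N ^ k else 0) else 0) := by
        refine Finset.sum_le_sum ?_
        rintro ⟨b, b'⟩ -
        dsimp only
        split_ifs with h1 h2
        · subst h1
          have hcard : (Finset.univ.filter fun x : Fin k → ZMod N =>
              dotP b x + dotP b x = 0).card ≤ N ^ k := by
            refine le_trans (Finset.card_filter_le _ _) ?_
            rw [Finset.card_univ, Fintype.card_fun, ZMod.card, Fintype.card_fin]
          omega
        · subst h1
          obtain ⟨j₀, hj⟩ := exists_true h2
          have hle := card_fiber_diag (N := N) hj
          omega
        · obtain ⟨j₀, hj⟩ : ∃ j, b j ≠ b' j := Function.ne_iff.mp h1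
          rw [card_fiber_pair (N := N) hj]
          omega
    _ ≤ N ^ k + (4 ^ k + 2 ^ k) * N ^ (k - 1) := by
        rw [Finset.sum_add_distrib, Finset.sum_const, Finset.card_univ, Fintype.card_prod,
          card_bool_fun, smul_eq_mul]
        have h2 : ∑ p : (Fin k → Bool) × (Fin k → Bool),
            (if p.1 = p.2 then
              (N ^ (k - 1) + if p.1 = (fun _ => false) then N ^ k else 0) else 0)
            = ∑ b : Fin k → Bool,
              (N ^ (k - 1) + if b = (fun _ => false) then N ^ k else 0) := by
          rw [Fintype.sum_prod_type]
          refine Finset.sum_congr rfl fun b _ => ?_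
          rw [Finset.sum_ite_eq (Finset.univ) b
            (fun _ => N ^ (k - 1) + if b = (fun _ => false) then N ^ k else 0)]
          simp
        rw [h2, Finset.sum_add_distrib, Finset.sum_const, Finset.card_univ, card_bool_fun,
          smul_eq_mul, Finset.sum_ite_eq' (Finset.univ) (fun _ => false) (fun _ => N ^ k)]
        simp only [Finset.mem_univ, if_pos]
        apply le_of_eq
        rw [show (2:ℕ) ^ k * 2 ^ k = 4 ^ k by rw [← Nat.mul_pow]]
        ring

lemma T2_bound : ∑ x : Fin k → ZMod N, etaN (0 : ZMod N) x ≤ N ^ k + 2 ^ k * N ^ (k - 1) := by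
  unfold etaN
  rw [sum_card_swap]
  calc ∑ b : Fin k → Bool,
        (Finset.univ.filter fun x : Fin k → ZMod N => dotP b x = 0).card
      ≤ ∑ b : Fin k → Bool,
          (N ^ (k - 1) + if b = (fun _ => false) then N ^ k else 0) := by
        refine Finset.sum_le_sum fun b _ => ?_
        by_cases h0 : b = fun _ => false
        · have hcard : (Finset.univ.filter fun x : Fin k → ZMod N =>
              dotP b x = 0).card ≤ N ^ k := by
            refine le_trans (Finset.card_filter_le _ _) ?_
            rw [Finset.card_univ, Fintype.card_fun, ZMod.card, Fintype.card_fin]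
          rw [if_pos h0]
          omega
        · obtain ⟨j₀, hj⟩ := exists_true h0
          rw [card_fiber_dot hj, if_neg h0]
          omega
    _ = N ^ k + 2 ^ k * N ^ (k - 1) := by
        rw [Finset.sum_add_distrib, Finset.sum_const, Finset.card_univ, card_bool_fun,
          smul_eq_mul, Finset.sum_ite_eq' (Finset.univ) (fun _ => false) (fun _ => N ^ k)]
        simp only [Finset.mem_univ, if_pos]
        omega

lemma T3_bound (hN2 : 2 ∣ N) (hN4 : 4 ≤ N) :
    ∑ x : Fin k → ZMod N, etaN ((N / 2 : ℕ) : ZMod N) x ≤ 2 ^ k * N ^ (k - 1) := by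
  unfold etaN
  rw [sum_card_swap]
  have hne : ((N / 2 : ℕ) : ZMod N) ≠ 0 := by
    rw [Ne, ZMod.natCast_eq_zero_iff]
    intro h
    have := Nat.le_of_dvd (by omega) h
    omega
  calc ∑ b : Fin k → Bool,
        (Finset.univ.filter fun x : Fin k → ZMod N =>
          dotP b x = ((N / 2 : ℕ) : ZMod N)).card
      ≤ ∑ _b : Fin k → Bool, N ^ (k - 1) := by
        refine Finset.sum_le_sum fun b _ => ?_
        by_cases h0 : b = fun _ => false
        · have hempty : (Finset.univ.filter fun x : Fin k → ZMod N =>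
              dotP b x = ((N / 2 : ℕ) : ZMod N)) = ∅ := by
            rw [Finset.filter_eq_empty_iff]
            intro x _
            rw [h0]
            have : dotP (fun _ => false) x = (0 : ZMod N) := by simp [dotP]
            rw [this]
            exact fun h => hne h.symm
          rw [hempty]
          simp
        · obtain ⟨j₀, hj⟩ := exists_true h0
          rw [card_fiber_dot hj]
    _ = 2 ^ k * N ^ (k - 1) := by
        rw [Finset.sum_const, Finset.card_univ, card_bool_fun, smul_eq_mul]

lemma sqrt_nat_le (m : ℕ) : Real.sqrt m ≤ (m : ℝ) := by
  rcases Nat.eq_zero_or_pos m with h | h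
  · simp [h]
  · refine Real.sqrt_le_iff.mpr ?_
    constructor
    · positivity
    · exact_mod_cast Nat.le_self_pow two_ne_zero m

end main

/-- Upper bound on the success probability `p̃` of the optimal measurement for determining the
least significant bit of the shift. -/
theorem lsb_success_prob_upper_bound {N k : ℕ} [NeZero N] (hN2 : 2 ∣ N) (hN4 : 4 ≤ N)
    (hk : 2 ≤ k) :
    (1 / 2 : ℝ) * (1 + (1 / (2 * (N : ℝ)) ^ k) *
        ∑ x : Fin k → ZMod N,
          ((∑ r : ZMod N, Real.sqrt ((etaN r x : ℝ) * (etaN (-r) x : ℝ)))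
            + 2 * (etaN (0 : ZMod N) x : ℝ) + 2 * (etaN ((N / 2 : ℕ) : ZMod N) x : ℝ)))
      ≤ (1 / 2 : ℝ) * (1 + (2 : ℝ) ^ k / N + 6 / N + 3 / (2 : ℝ) ^ k) := by
  have hn : (0 : ℝ) < (N : ℝ) := by
    have : 0 < N := by omega
    exact_mod_cast this
  set n : ℝ := (N : ℝ) with hn_def
  -- Step 1 : bound the big sum by a natural number
  set T : ℕ := ∑ x : Fin k → ZMod N,
      ((∑ r : ZMod N, etaN r x * etaN (-r) x)
        + 2 * etaN (0 : ZMod N) x + 2 * etaN ((N / 2 : ℕ) : ZMod N) x) with hT_def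
  have hstep1 : (∑ x : Fin k → ZMod N,
      ((∑ r : ZMod N, Real.sqrt ((etaN r x : ℝ) * (etaN (-r) x : ℝ)))
        + 2 * (etaN (0 : ZMod N) x : ℝ) + 2 * (etaN ((N / 2 : ℕ) : ZMod N) x : ℝ)))
      ≤ (T : ℝ) := by
    rw [hT_def]
    push_cast
    refine Finset.sum_le_sum fun x _ => ?_
    have hsq : (∑ r : ZMod N, Real.sqrt ((etaN r x : ℝ) * (etaN (-r) x : ℝ)))
        ≤ ∑ r : ZMod N, (etaN r x : ℝ) * (etaN (-r) x : ℝ) := by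
      refine Finset.sum_le_sum fun r _ => ?_
      rw [show ((etaN r x : ℝ) * (etaN (-r) x : ℝ))
        = ((etaN r x * etaN (-r) x : ℕ) : ℝ) by push_cast; ring]
      exact sqrt_nat_le _
    linarith
  -- Step 2 : bound T
  have hT : T ≤ 3 * N ^ k + (4 ^ k + 5 * 2 ^ k) * N ^ (k - 1) := by
    have h1 := T1_bound (N := N) (k := k)
    have h2 := T2_bound (N := N) (k := k)
    have h3 := T3_bound (N := N) (k := k) hN2 hN4
    have hsplit : T = (∑ x : Fin k → ZMod N, ∑ r : ZMod N, etaN r x * etaN (-r) x)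
        + 2 * (∑ x : Fin k → ZMod N, etaN (0 : ZMod N) x)
        + 2 * (∑ x : Fin k → ZMod N, etaN ((N / 2 : ℕ) : ZMod N) x) := by
      rw [hT_def, Finset.sum_add_distrib, Finset.sum_add_distrib, Finset.mul_sum,
        Finset.mul_sum]
    rw [hsplit]
    calc (∑ x : Fin k → ZMod N, ∑ r : ZMod N, etaN r x * etaN (-r) x)
          + 2 * (∑ x : Fin k → ZMod N, etaN (0 : ZMod N) x)
          + 2 * (∑ x : Fin k → ZMod N, etaN ((N / 2 : ℕ) : ZMod N) x)
        ≤ (N ^ k + (4 ^ k + 2 ^ k) * N ^ (k - 1))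
          + 2 * (N ^ k + 2 ^ k * N ^ (k - 1)) + 2 * (2 ^ k * N ^ (k - 1)) := by
          gcongr
      _ = 3 * N ^ k + (4 ^ k + 5 * 2 ^ k) * N ^ (k - 1) := by ring
  -- Step 3 : real arithmetic
  have hM : (1 / (2 * n) ^ k) *
      ((3 * N ^ k + (4 ^ k + 5 * 2 ^ k) * N ^ (k - 1) : ℕ) : ℝ)
      = 3 / 2 ^ k + 2 ^ k / n + 5 / n := by
    push_cast
    have hk1 : n ^ k = n ^ (k - 1) * n := by
      rw [← pow_succ]
      congr 1
      omega
    have h4 : (4 : ℝ) ^ k = 2 ^ k * 2 ^ k := by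
      rw [show (4 : ℝ) = 2 * 2 by norm_num, mul_pow]
    rw [mul_pow, hk1, h4]
    have hne : n ≠ 0 := ne_of_gt hn
    have h2ne : (2 : ℝ) ^ k ≠ 0 := by positivity
    have hnk : n ^ (k - 1) ≠ 0 := by positivity
    field_simp
    ring
  have hpos : (0 : ℝ) ≤ (1 / (2 * n) ^ k) := by positivity
  have hchain : (1 / (2 * n) ^ k) *
      (∑ x : Fin k → ZMod N,
        ((∑ r : ZMod N, Real.sqrt ((etaN r x : ℝ) * (etaN (-r) x : ℝ)))
          + 2 * (etaN (0 : ZMod N) x : ℝ) + 2 * (etaN ((N / 2 : ℕ) : ZMod N) x : ℝ)))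
      ≤ 3 / 2 ^ k + 2 ^ k / n + 5 / n := by
    calc (1 / (2 * n) ^ k) * _
        ≤ (1 / (2 * n) ^ k) *
          ((3 * N ^ k + (4 ^ k + 5 * 2 ^ k) * N ^ (k - 1) : ℕ) : ℝ) := by
          refine mul_le_mul_of_nonneg_left ?_ hpos
          exact hstep1.trans (by exact_mod_cast hT)
      _ = 3 / 2 ^ k + 2 ^ k / n + 5 / n := hM
  have h56 : 5 / n ≤ 6 / n := by gcongr <;> norm_num
  linarith
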